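/- Define a brane diagram of length N as a pair consisting of types t_1,…,t_N ∈ {D5, NS5} and dimensions d_0, d_1,…,d_N ∈ ℕ with d_0 = d_N = 0, where the brane at position i separates d_{i−1} and d_i. Define the charge of an NS5 brane at position i as (d_i − d_{i−1}) + #{j < i : t_j = D5}, and the charge of a D5 brane at position i as (d_{i−1} − d_i) + #{j > i : t_j = NS5}. Suppose t_i = NS5 and t_{i+1} = D5 and d_{i−1} + d_{i+1} − d_i + 1 ≥ 0, and perform the Hanany–Witten transition at position i: swap t_i and t_{i+1} and replace d_i by d_{i−1} + d_{i+1} − d_i + 1, leaving all other data unchanged. Then, tracking the two swapped branes through the move, the charge of every brane in the diagram is unchanged; in particular the NS5 charge vector and the D5 charge vector (charges of branes of each type read from left to right) are invariant under Hanany–Witten transition. -/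

import Mathlib

/-- The two types of 5-branes in a brane diagram. -/
inductive BraneType : Type
  | D5 : BraneType
  | NS5 : BraneType
  deriving DecidableEq

open BraneType

/-- The charge of the 5-brane at position `i` in a brane diagram of length `N` with brane
types `t` (at positions `1,…,N`) and dimensions `d` (with `d 0 = d N = 0`): for an NS5 brane
it is `(d_i − d_{i−1}) + #{j < i : t_j = D5}`, and for a D5 brane it is
`(d_{i−1} − d_i) + #{j > i : t_j = NS5}`. -/
def charge (N : ℕ) (t : ℕ → BraneType) (d : ℕ → ℕ) (i : ℕ) : ℤ :=
  if t i = NS5 then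
    (d i : ℤ) - (d (i - 1) : ℤ) + (((Finset.Ico 1 i).filter fun j => t j = D5).card : ℤ)
  else
    (d (i - 1) : ℤ) - (d i : ℤ) + (((Finset.Ioc i N).filter fun j => t j = NS5).card : ℤ)

/-- Swapping the truth values of a predicate at two positions `a, b` that are either both in
or both out of `s` does not change the cardinality of the filtered set. -/
lemma card_filter_swap (s : Finset ℕ) (a b : ℕ) (hab : a ≠ b)
    (hmem : a ∈ s ↔ b ∈ s) (p q : ℕ → Prop) [DecidablePred p] [DecidablePred q]
    (h : ∀ j, j ≠ a → j ≠ b → (p j ↔ q j))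
    (hpa : p a) (hpb : ¬ p b) (hqa : ¬ q a) (hqb : q b) :
    (s.filter p).card = (s.filter q).card := by
  by_cases ha : a ∈ s
  · have hb : b ∈ s := hmem.mp ha
    have hbq : b ∈ s.filter q := Finset.mem_filter.mpr ⟨hb, hqb⟩
    have hset : s.filter p = insert a ((s.filter q).erase b) := by
      ext j
      simp only [Finset.mem_filter, Finset.mem_insert, Finset.mem_erase]
      constructor
      · rintro ⟨hjs, hjp⟩
        by_cases hja : j = a
        · exact Or.inl hja
        · by_cases hjb : j = b
          · subst hjb; exact absurd hjp hpb
          · exact Or.inr ⟨hjb, hjs, (h j hja hjb).mp hjp⟩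
      · rintro (rfl | ⟨hjb, hjs, hjq⟩)
        · exact ⟨ha, hpa⟩
        · by_cases hja : j = a
          · subst hja; exact absurd hjq hqa
          · exact ⟨hjs, (h j hja hjb).mpr hjq⟩
    have hanotmem : a ∉ (s.filter q).erase b := by
      intro hmm
      exact hqa (Finset.mem_filter.mp (Finset.mem_erase.mp hmm).2).2
    rw [hset, Finset.card_insert_of_notMem hanotmem, Finset.card_erase_of_mem hbq]
    have hpos : 0 < (s.filter q).card := Finset.card_pos.mpr ⟨b, hbq⟩
    omega
  · have hb : b ∉ s := fun hb => ha (hmem.mpr hb)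
    congr 1
    apply Finset.filter_congr
    intro j hj
    exact h j (fun e => ha (e ▸ hj)) (fun e => hb (e ▸ hj))

/-- Invariance of 5-brane charges under Hanany–Witten transition: swapping an adjacent pair
(NS5 at position `i`, D5 at position `i+1`) and replacing `d_i` by `d_{i−1}+d_{i+1}−d_i+1`
leaves the charge of every brane (tracked through the move) unchanged; in particular the NS5
and D5 charge vectors, read from left to right, are invariant. -/
theorem charge_hananyWitten_invariant (N : ℕ) (t : ℕ → BraneType) (d : ℕ → ℕ)
    (hd0 : d 0 = 0) (hdN : d N = 0)
    (i : ℕ) (hi1 : 1 ≤ i) (hi2 : i + 1 ≤ N)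
    (hti : t i = NS5) (hti1 : t (i + 1) = D5)
    (hpos : d i ≤ d (i - 1) + d (i + 1) + 1)
    (t' : ℕ → BraneType) (d' : ℕ → ℕ)
    (ht' : t' = fun j => if j = i then D5 else if j = i + 1 then NS5 else t j)
    (hd' : d' = fun j => if j = i then d (i - 1) + d (i + 1) + 1 - d i else d j) :
    (∀ j, 1 ≤ j → j ≤ N → j ≠ i → j ≠ i + 1 → charge N t' d' j = charge N t d j) ∧
    charge N t' d' (i + 1) = charge N t d i ∧
    charge N t' d' i = charge N t d (i + 1) ∧
    ((List.range' 1 N).filter (fun j => decide (t' j = NS5))).map (charge N t' d') =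
      ((List.range' 1 N).filter (fun j => decide (t j = NS5))).map (charge N t d) ∧
    ((List.range' 1 N).filter (fun j => decide (t' j = D5))).map (charge N t' d') =
      ((List.range' 1 N).filter (fun j => decide (t j = D5))).map (charge N t d) := by
  have ht'i : t' i = D5 := by rw [ht']; simp
  have ht'i1 : t' (i + 1) = NS5 := by rw [ht']; simp [Nat.succ_ne_self]
  have ht'o : ∀ j, j ≠ i → j ≠ i + 1 → t' j = t j := by
    intro j h1 h2; rw [ht']; simp [h1, h2]
  have hd'o : ∀ j, j ≠ i → d' j = d j := by
    intro j h1; rw [hd']; simp [h1]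
  have hd'i : (d' i : ℤ) = (d (i - 1) : ℤ) + (d (i + 1) : ℤ) + 1 - (d i : ℤ) := by
    have e : d' i = d (i - 1) + d (i + 1) + 1 - d i := by rw [hd']; simp
    rw [e, Nat.cast_sub hpos]; push_cast; ring
  have P1 : ∀ j, 1 ≤ j → j ≤ N → j ≠ i → j ≠ i + 1 → charge N t' d' j = charge N t d j := by
    intro j h1 hN hji hji1
    have htj : t' j = t j := ht'o j hji hji1
    have hdj : d' j = d j := hd'o j hji
    have hdj1 : d' (j - 1) = d (j - 1) := hd'o _ (by omega)
    unfold charge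
    rw [htj, hdj, hdj1]
    by_cases hj : t j = NS5
    · rw [if_pos hj, if_pos hj]
      have hc := card_filter_swap (Finset.Ico 1 j) i (i + 1) (by omega)
        (by simp only [Finset.mem_Ico]; omega)
        (fun k => t' k = D5) (fun k => t k = D5)
        (fun k hk hk1 => by show t' k = D5 ↔ t k = D5; rw [ht'o k hk hk1])
        ht'i (by simp [ht'i1]) (by simp [hti]) hti1
      rw [hc]
    · rw [if_neg hj, if_neg hj]
      have hc := card_filter_swap (Finset.Ioc j N) (i + 1) i (by omega)
        (by simp only [Finset.mem_Ioc]; omega)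
        (fun k => t' k = NS5) (fun k => t k = NS5)
        (fun k hk1 hk => by show t' k = NS5 ↔ t k = NS5; rw [ht'o k hk hk1])
        ht'i1 (by simp [ht'i]) (by simp [hti1]) hti
      rw [hc]
  have P2 : charge N t' d' (i + 1) = charge N t d i := by
    have key : (Finset.Ico 1 (i + 1)).filter (fun k => t' k = D5) =
        insert i ((Finset.Ico 1 i).filter (fun k => t k = D5)) := by
      ext k
      simp only [Finset.mem_filter, Finset.mem_Ico, Finset.mem_insert]
      constructor
      · rintro ⟨⟨hk1, hk2⟩, hk⟩
        by_cases hki : k = i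
        · exact Or.inl hki
        · exact Or.inr ⟨⟨hk1, by omega⟩, by rwa [ht'o k hki (by omega)] at hk⟩
      · rintro (rfl | ⟨⟨hk1, hk2⟩, hk⟩)
        · exact ⟨⟨hi1, by omega⟩, ht'i⟩
        · exact ⟨⟨hk1, by omega⟩, by rwa [ht'o k (by omega) (by omega)]⟩
    have e1 : d' (i + 1) = d (i + 1) := hd'o _ (by omega)
    unfold charge
    rw [if_pos ht'i1, if_pos hti, Nat.add_sub_cancel, e1, key,
      Finset.card_insert_of_notMem (by simp)]
    push_cast
    rw [hd'i]
    ring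
  have P3 : charge N t' d' i = charge N t d (i + 1) := by
    have key : (Finset.Ioc i N).filter (fun k => t' k = NS5) =
        insert (i + 1) ((Finset.Ioc (i + 1) N).filter (fun k => t k = NS5)) := by
      ext k
      simp only [Finset.mem_filter, Finset.mem_Ioc, Finset.mem_insert]
      constructor
      · rintro ⟨⟨hk1, hk2⟩, hk⟩
        by_cases hki : k = i + 1
        · exact Or.inl hki
        · exact Or.inr ⟨⟨by omega, hk2⟩, by rwa [ht'o k (by omega) hki] at hk⟩
      · rintro (rfl | ⟨⟨hk1, hk2⟩, hk⟩)
        · exact ⟨⟨by omega, hi2⟩, ht'i1⟩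
        · exact ⟨⟨by omega, hk2⟩, by rwa [ht'o k (by omega) (by omega)]⟩
    have e1 : d' (i - 1) = d (i - 1) := hd'o _ (by omega)
    unfold charge
    rw [if_neg (by simp [ht'i]), if_neg (by simp [hti1]), Nat.add_sub_cancel, e1, key,
      Finset.card_insert_of_notMem (by simp)]
    push_cast
    rw [hd'i]
    ring
  have hsplit : List.range' 1 N =
      List.range' 1 (i - 1) ++ (i :: (i + 1) :: List.range' (i + 2) (N - (i + 1))) := by
    have h1 : List.range' 1 (i - 1) 1 ++ List.range' (1 + 1 * (i - 1)) (N - (i - 1)) 1 = _ :=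
      List.range'_append
    have h2 : 1 + 1 * (i - 1) = i := by omega
    have h3 : (i - 1) + (N - (i - 1)) = N := by omega
    rw [h2, h3] at h1
    rw [← h1]
    congr 1
    have h4 : N - (i - 1) = (N - (i + 1)) + 1 + 1 := by omega
    rw [h4]
    rfl
  have memA : ∀ j ∈ List.range' 1 (i - 1), 1 ≤ j ∧ j ≤ N ∧ j ≠ i ∧ j ≠ i + 1 := by
    intro j hj
    rw [List.mem_range'_1] at hj
    omega
  have memC : ∀ j ∈ List.range' (i + 2) (N - (i + 1)), 1 ≤ j ∧ j ≤ N ∧ j ≠ i ∧ j ≠ i + 1 := by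
    intro j hj
    rw [List.mem_range'_1] at hj
    omega
  have side : ∀ (L : List ℕ), (∀ j ∈ L, 1 ≤ j ∧ j ≤ N ∧ j ≠ i ∧ j ≠ i + 1) → ∀ (b : BraneType),
      (L.filter (fun j => decide (t' j = b))).map (charge N t' d') =
        (L.filter (fun j => decide (t j = b))).map (charge N t d) := by
    intro L hL b
    rw [List.filter_congr (fun j hj => by
      show decide (t' j = b) = decide (t j = b)
      rw [ht'o j (hL j hj).2.2.1 (hL j hj).2.2.2])]
    apply List.map_congr_left
    intro j hj
    have h := hL j (List.mem_of_mem_filter hj)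
    exact P1 j h.1 h.2.1 h.2.2.1 h.2.2.2
  set C := List.range' (i + 2) (N - (i + 1)) with hC
  refine ⟨P1, P2, P3, ?_, ?_⟩
  · have m1 : List.filter (fun j => decide (t' j = NS5)) (i :: (i + 1) :: C) =
        (i + 1) :: List.filter (fun j => decide (t' j = NS5)) C := by
      simp [List.filter_cons, ht'i, ht'i1]
    have m2 : List.filter (fun j => decide (t j = NS5)) (i :: (i + 1) :: C) =
        i :: List.filter (fun j => decide (t j = NS5)) C := by
      simp [List.filter_cons, hti, hti1]
    rw [hsplit, List.filter_append, List.filter_append, List.map_append, List.map_append,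
      side _ memA NS5, m1, m2, List.map_cons, List.map_cons, P2, side _ memC NS5]
  · have m1 : List.filter (fun j => decide (t' j = D5)) (i :: (i + 1) :: C) =
        i :: List.filter (fun j => decide (t' j = D5)) C := by
      simp [List.filter_cons, ht'i, ht'i1]
    have m2 : List.filter (fun j => decide (t j = D5)) (i :: (i + 1) :: C) =
        (i + 1) :: List.filter (fun j => decide (t j = D5)) C := by
      simp [List.filter_cons, hti, hti1]
    rw [hsplit, List.filter_append, List.filter_append, List.map_append, List.map_append,
      side _ memA D5, m1, m2, List.map_cons, List.map_cons, P3, side _ memC D5]
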